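/- (Bhatia–Davis inequality) Let X be a real-valued random variable on a probability space with m ≤ X ≤ M almost surely and mean μ = E[X]. Then Var(X) ≤ (M − μ)(μ − m). -/

import Mathlib

open MeasureTheory ProbabilityTheory

/-- the Bhatia–Davis inequality: if `m ≤ X ≤ M` almost surely and
`μ = E[X]`, then `Var(X) ≤ (M − μ)(μ − m)`. -/
theorem bhatia_davis {Ω : Type*} [MeasureSpace Ω] [IsProbabilityMeasure (ℙ : Measure Ω)]
    (X : Ω → ℝ) (hX : AEStronglyMeasurable X ℙ) (m M : ℝ)
    (hbound : ∀ᵐ ω ∂(ℙ : Measure Ω), m ≤ X ω ∧ X ω ≤ M) :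
    variance X ℙ ≤ (M - ∫ ω, X ω) * ((∫ ω, X ω) - m) := by
  set μ := ∫ ω, X ω with hμ
  have hIcc : ∀ᵐ ω ∂(ℙ : Measure Ω), X ω ∈ Set.Icc m M := by
    filter_upwards [hbound] with ω hω using ⟨hω.1, hω.2⟩
  have h2 : MemLp X 2 ℙ := memLp_of_bounded hIcc hX 2
  have hint : Integrable X ℙ := h2.integrable (by norm_num)
  have hsq : Integrable (fun ω => X ω ^ 2) ℙ := h2.integrable_sq
  have key : 0 ≤ ∫ ω, (M - X ω) * (X ω - m) := by
    apply integral_nonneg_of_ae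
    filter_upwards [hbound] with ω hω
    exact mul_nonneg (by linarith [hω.2]) (by linarith [hω.1])
  have hexp : ∀ ω, (M - X ω) * (X ω - m) = -(X ω ^ 2) + (M + m) * X ω - M * m := by
    intro ω; ring
  have hI : ∫ ω, (M - X ω) * (X ω - m)
      = -(∫ ω, X ω ^ 2) + (M + m) * μ - M * m * 1 := by
    simp_rw [hexp]
    have h1 : Integrable (fun ω => -X ω ^ 2) ℙ := hsq.neg
    have h2' : Integrable (fun ω => (M + m) * X ω) ℙ := hint.const_mul _
    have h12 : Integrable (fun ω => -X ω ^ 2 + (M + m) * X ω) ℙ := h1.add h2'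
    rw [integral_sub h12 (integrable_const _),
      integral_add h1 h2', integral_neg, integral_const_mul,
      integral_const, probReal_univ]
    simp [hμ]
  have hvar : variance X ℙ = (∫ ω, X ω ^ 2) - μ ^ 2 := variance_eq_sub h2
  have hmeas : (ℙ : Measure Ω) Set.univ = 1 := measure_univ
  rw [hI] at key
  nlinarith [key, hvar]
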